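/- On the elliptic curve E : y^2 = x^3 - 409948 x^2 + 20578452576 x - 2360098139294192 over Q, the point P = (1054152, 857435524) is a rational point of order exactly 5. -/

import Mathlib

open WeierstrassCurve.Affine

/-- The elliptic curve `E : y² = x³ - 409948x² + 20578452576x - 2360098139294192` over `ℚ`. -/
noncomputable def E : WeierstrassCurve.Affine ℚ :=
  { a₁ := 0, a₂ := -409948, a₃ := 0, a₄ := 20578452576, a₆ := -2360098139294192 }

lemma some_congr {W : WeierstrassCurve.Affine ℚ} {x₁ y₁ x₂ y₂ : ℚ}
    (h₁ : W.Nonsingular x₁ y₁) (h₂ : W.Nonsingular x₂ y₂) (hx : x₁ = x₂) (hy : y₁ = y₂) :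
    Point.some _ _ h₁ = Point.some _ _ h₂ := by subst hx; subst hy; rfl

lemma hP : E.Nonsingular 1054152 857435524 := by
  rw [nonsingular_iff, equation_iff]
  refine ⟨by norm_num [E], Or.inr (by norm_num [E])⟩

lemma hP2 : E.Nonsingular 409948 77948684 := by
  rw [nonsingular_iff, equation_iff]
  refine ⟨by norm_num [E], Or.inr (by norm_num [E])⟩

lemma hP4 : E.Nonsingular 1054152 (-857435524) := by
  rw [nonsingular_iff, equation_iff]
  refine ⟨by norm_num [E], Or.inr (by norm_num [E])⟩

lemma two_P : Point.some _ _ hP + Point.some _ _ hP = Point.some _ _ hP2 := by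
  have hy : (857435524 : ℚ) ≠ E.negY 1054152 857435524 := by norm_num [negY, E]
  rw [Point.add_self_of_Y_ne hy]
  apply some_congr
  · rw [addX, slope_of_Y_ne rfl hy, negY]; norm_num [E]
  · rw [addY, negAddY, addX, slope_of_Y_ne rfl hy, negY, negY]; norm_num [E]

lemma four_P : Point.some _ _ hP2 + Point.some _ _ hP2 = Point.some _ _ hP4 := by
  have hy : (77948684 : ℚ) ≠ E.negY 409948 77948684 := by norm_num [negY, E]
  rw [Point.add_self_of_Y_ne hy]
  apply some_congr
  · rw [addX, slope_of_Y_ne rfl hy, negY]; norm_num [E]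
  · rw [addY, negAddY, addX, slope_of_Y_ne rfl hy, negY, negY]; norm_num [E]

lemma five_P : (5 : ℕ) • Point.some _ _ hP = 0 := by
  have h5 : Point.some _ _ hP4 + Point.some _ _ hP = 0 :=
    Point.add_of_Y_eq rfl (by norm_num [negY, E])
  calc (5 : ℕ) • Point.some _ _ hP
      = (Point.some _ _ hP + Point.some _ _ hP) + (Point.some _ _ hP + Point.some _ _ hP) + Point.some _ _ hP := by
        abel
    _ = 0 := by rw [two_P, four_P, h5]

/-- The point `P = (1054152, 857435524)` is a rational point of order exactly `5` on `E`. -/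
theorem P_has_order_five :
    ∃ h : E.Nonsingular 1054152 857435524, addOrderOf (Point.some _ _ h) = 5 := by
  refine ⟨hP, ?_⟩
  haveI : Fact (Nat.Prime 5) := ⟨by norm_num⟩
  exact addOrderOf_eq_prime five_P (by simp [Point.zero_def])
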